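/- Let S ⊆ M₂(F_q) be a product-type set, i.e., S corresponds to S₁ × S₂ ⊆ F_q² × F_q² under identifying a matrix with its pair of rows. Then for each i ∈ F_q*, ||S ∩ D_i| − |S|/q| ≤ q^{1/2} |S|^{1/2}. -/

import Mathlib

open Finset

section Aux
variable {K : Type*} [Field K] [Fintype K] [DecidableEq K]

private lemma vec_ne_zero_iff (b : Fin 2 → K) : b ≠ 0 ↔ b 0 ≠ 0 ∨ b 1 ≠ 0 := by
  constructor
  · intro h
    by_contra hc
    push_neg at hc
    exact h (funext fun x => by fin_cases x <;> simp [hc.1, hc.2])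
  · rintro (h | h) h0 <;> simp [h0] at h

private lemma graph_card_1 (p : (Fin 2 → K) → Prop) [DecidablePred p] (f : K → K)
    (hp : ∀ a, p a ↔ a 1 = f (a 0)) :
    (univ.filter p).card = Fintype.card K := by
  rw [← Finset.card_univ (α := K)]
  apply Finset.card_nbij' (fun a => a 0) (fun t => ![t, f t])
  · intro a _; exact mem_univ _
  · intro t _
    simp [hp]
  · intro a ha
    simp only [Finset.mem_coe, Finset.mem_filter, Finset.mem_univ, true_and, hp] at ha
    funext x; fin_cases x <;> simp [ha]
  · intro t _; simp

private lemma graph_card_0 (p : (Fin 2 → K) → Prop) [DecidablePred p] (f : K → K)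
    (hp : ∀ a, p a ↔ a 0 = f (a 1)) :
    (univ.filter p).card = Fintype.card K := by
  rw [← Finset.card_univ (α := K)]
  apply Finset.card_nbij' (fun a => a 1) (fun t => ![f t, t])
  · intro a _; exact mem_univ _
  · intro t _
    simp [hp]
  · intro a ha
    simp only [Finset.mem_coe, Finset.mem_filter, Finset.mem_univ, true_and, hp] at ha
    funext x; fin_cases x <;> simp [ha]
  · intro t _; simp

private lemma fiber_card (b : Fin 2 → K) (hb : b ≠ 0) (j : K) :
    (univ.filter (fun a : Fin 2 → K => a 0 * b 1 - a 1 * b 0 = j)).card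
      = Fintype.card K := by
  by_cases hb0 : b 0 = 0
  · have hb1 : b 1 ≠ 0 := by
      rcases (vec_ne_zero_iff b).1 hb with h | h
      · exact absurd hb0 h
      · exact h
    apply graph_card_0 _ (fun _ => j / b 1)
    intro a
    rw [eq_div_iff hb1]
    constructor
    · intro h; linear_combination h + a 1 * hb0
    · intro h; linear_combination h - a 1 * hb0
  · apply graph_card_1 _ (fun t => (t * b 1 - j) / b 0)
    intro a
    rw [eq_div_iff hb0]
    constructor
    · intro h; linear_combination -h
    · intro h; linear_combination -h

private lemma pair_card_le (i : K) (hi : i ≠ 0) (b b' : Fin 2 → K)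
    (hb : b ≠ 0) (hb' : b' ≠ 0) (hne : b ≠ b') :
    (univ.filter (fun a : Fin 2 → K =>
      a 0 * b 1 - a 1 * b 0 = i ∧ a 0 * b' 1 - a 1 * b' 0 = i)).card ≤ 1 := by
  rw [Finset.card_le_one]
  intro a ha c hc
  simp only [Finset.mem_filter, Finset.mem_univ, true_and] at ha hc
  obtain ⟨h1, h2⟩ := ha
  obtain ⟨h3, h4⟩ := hc
  by_cases hdet : b 0 * b' 1 - b 1 * b' 0 = 0
  · exfalso
    apply hne
    by_cases hb0 : b 0 = 0
    · have hb1 : b 1 ≠ 0 := by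
        rcases (vec_ne_zero_iff b).1 hb with h | h
        · exact absurd hb0 h
        · exact h
      have hb'0 : b' 0 = 0 := by
        have hz : b 1 * b' 0 = 0 := by linear_combination b' 1 * hb0 - hdet
        rcases mul_eq_zero.1 hz with h | h
        · exact absurd h hb1
        · exact h
      have ha0 : a 0 ≠ 0 := by
        intro h
        apply hi
        linear_combination -h1 + b 1 * h - a 1 * hb0
      have hbb : b 1 = b' 1 := by
        apply mul_left_cancel₀ ha0
        linear_combination h1 - h2 + a 1 * hb0 - a 1 * hb'0
      funext x; fin_cases x
      · simpa using hb0.trans hb'0.symm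
      · simpa using hbb
    · have key : b' 0 * i = b 0 * i := by
        linear_combination (-(b' 0)) * h1 + b 0 * h2 - a 0 * hdet
      have hb'0 : b' 0 = b 0 := mul_right_cancel₀ hi key
      have hb'1 : b' 1 = b 1 := by
        apply mul_left_cancel₀ hb0
        linear_combination hdet + b 1 * hb'0
      funext x; fin_cases x
      · simpa using hb'0.symm
      · simpa using hb'1.symm
  · have e1 : (a 0 - c 0) * b 1 = (a 1 - c 1) * b 0 := by linear_combination h1 - h3
    have e2 : (a 0 - c 0) * b' 1 = (a 1 - c 1) * b' 0 := by linear_combination h2 - h4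
    have g0 : (a 0 - c 0) * (b 0 * b' 1 - b 1 * b' 0) = 0 := by
      linear_combination b 0 * e2 - b' 0 * e1
    have g1 : (a 1 - c 1) * (b 0 * b' 1 - b 1 * b' 0) = 0 := by
      linear_combination b 1 * e2 - b' 1 * e1
    have ha0 : a 0 = c 0 := by
      rcases mul_eq_zero.1 g0 with h | h
      · exact sub_eq_zero.1 h
      · exact absurd h hdet
    have ha1 : a 1 = c 1 := by
      rcases mul_eq_zero.1 g1 with h | h
      · exact sub_eq_zero.1 h
      · exact absurd h hdet
    funext x; fin_cases x <;> simp [ha0, ha1]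

end Aux
set_option maxHeartbeats 1000000 in
theorem stmt_12 {K : Type*} [Field K] [Fintype K] [DecidableEq K]
    (S1 S2 : Finset (Fin 2 → K)) (i : K) (hi : i ≠ 0) :
    |((((S1 ×ˢ S2).filter
          (fun p => p.1 0 * p.2 1 - p.1 1 * p.2 0 = i)).card : ℝ)) -
        (S1.card : ℝ) * S2.card / Fintype.card K| ≤
      Real.sqrt (Fintype.card K) * Real.sqrt ((S1.card : ℝ) * S2.card) := by
  classical
  set q : ℕ := Fintype.card K with hq
  set T : (Fin 2 → K) → ℕ :=
    fun a => (S2.filter (fun b => a 0 * b 1 - a 1 * b 0 = i)).card with hT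
  set S2' : Finset (Fin 2 → K) := S2.filter (fun b => b ≠ 0) with hS2'
  set m : ℕ := S2'.card with hm
  set n : ℕ := S2.card with hn
  -- step 1 : count as a sum over S1
  have hcount : ((S1 ×ˢ S2).filter
      (fun p => p.1 0 * p.2 1 - p.1 1 * p.2 0 = i)).card = ∑ a ∈ S1, T a := by
    rw [Finset.card_filter, Finset.sum_product]
    exact Finset.sum_congr rfl fun a _ => (Finset.card_filter _ _).symm
  -- step 2 : first moment
  have hfiber0 : ∀ b : Fin 2 → K, b = 0 → ∀ a : Fin 2 → K,
      ¬ (a 0 * b 1 - a 1 * b 0 = i) := by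
    intro b hb a h
    rw [hb] at h
    simp at h
    exact hi h.symm
  have hsum1 : ∑ a : Fin 2 → K, T a = q * m := by
    simp_rw [hT, Finset.card_filter]
    rw [Finset.sum_comm]
    have : ∀ b ∈ S2, (∑ a : Fin 2 → K,
        if a 0 * b 1 - a 1 * b 0 = i then 1 else 0) = if b ≠ 0 then q else 0 := by
      intro b _
      rw [← Finset.card_filter]
      by_cases hb : b = 0
      · rw [if_neg (by simpa using hb)]
        rw [Finset.card_eq_zero, Finset.filter_eq_empty_iff]
        intro a _
        exact hfiber0 b hb a
      · rw [if_pos hb]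
        exact fiber_card b hb i
    rw [Finset.sum_congr rfl this, Finset.sum_ite, Finset.sum_const, Finset.sum_const]
    simp [hS2', mul_comm]
    exact Or.inl rfl
  -- step 3 : second moment
  have hsum2 : ∑ a : Fin 2 → K, T a ^ 2 ≤ q * m + (m * m - m) := by
    have expand : ∀ a : Fin 2 → K, T a ^ 2 = ∑ b ∈ S2, ∑ b' ∈ S2,
        if (a 0 * b 1 - a 1 * b 0 = i ∧ a 0 * b' 1 - a 1 * b' 0 = i) then 1 else 0 := by
      intro a
      simp only [hT]
      rw [sq, Finset.card_filter, Finset.sum_mul_sum]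
      refine Finset.sum_congr rfl fun b _ => Finset.sum_congr rfl fun b' _ => ?_
      split_ifs with h1 h2 h3 <;> simp_all
    simp_rw [expand]
    rw [Finset.sum_comm]
    have swap2 : ∀ b ∈ S2, (∑ a : Fin 2 → K, ∑ b' ∈ S2,
        if (a 0 * b 1 - a 1 * b 0 = i ∧ a 0 * b' 1 - a 1 * b' 0 = i) then 1 else 0)
        = ∑ b' ∈ S2, (Finset.univ.filter (fun a : Fin 2 → K =>
            a 0 * b 1 - a 1 * b 0 = i ∧ a 0 * b' 1 - a 1 * b' 0 = i)).card := by
      intro b _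
      rw [Finset.sum_comm]
      exact Finset.sum_congr rfl fun b' _ => (Finset.card_filter _ _).symm
    rw [Finset.sum_congr rfl swap2]
    -- restrict to nonzero rows
    set N : (Fin 2 → K) → (Fin 2 → K) → ℕ := fun b b' =>
      (Finset.univ.filter (fun a : Fin 2 → K =>
        a 0 * b 1 - a 1 * b 0 = i ∧ a 0 * b' 1 - a 1 * b' 0 = i)).card with hN
    have hNzero : ∀ b b', (b = 0 ∨ b' = 0) → N b b' = 0 := by
      intro b b' hbb
      rw [hN, Finset.card_eq_zero, Finset.filter_eq_empty_iff]
      intro a _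
      rcases hbb with h | h
      · exact fun hc => hfiber0 b h a hc.1
      · exact fun hc => hfiber0 b' h a hc.2
    have hrestr : (∑ b ∈ S2, ∑ b' ∈ S2, N b b') = ∑ b ∈ S2', ∑ b' ∈ S2', N b b' := by
      rw [hS2']
      rw [Finset.sum_filter_of_ne, ]
      · refine Finset.sum_congr rfl fun b _ => ?_
        rw [Finset.sum_filter_of_ne]
        intro b' _ hb'
        by_contra hc
        rw [hNzero b b' (Or.inr hc)] at hb'
        exact hb' rfl
      · intro b _ hb
        by_contra hc
        apply hb
        refine Finset.sum_eq_zero fun b' _ => hNzero b b' (Or.inl hc)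
    rw [hrestr]
    have hsplit : (∑ b ∈ S2', ∑ b' ∈ S2', N b b')
        = (∑ p ∈ (S2' ×ˢ S2'), N p.1 p.2) := (Finset.sum_product' (s := S2') (t := S2') (f := fun b b' => N b b')).symm
    rw [hsplit, ← Finset.diag_union_offDiag,
      Finset.sum_union (Finset.disjoint_diag_offDiag _)]
    have hdiag : (∑ p ∈ S2'.diag, N p.1 p.2) = q * m := by
      rw [Finset.sum_diag]
      have : ∀ b ∈ S2', N b b = q := by
        intro b hb
        have hb0 : b ≠ 0 := (Finset.mem_filter.1 hb).2
        rw [hN]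
        simp only [and_self]
        exact fiber_card b hb0 i
      rw [Finset.sum_congr rfl this, Finset.sum_const, smul_eq_mul, mul_comm]
    have hoff : (∑ p ∈ S2'.offDiag, N p.1 p.2) ≤ m * m - m := by
      calc (∑ p ∈ S2'.offDiag, N p.1 p.2) ≤ ∑ _p ∈ S2'.offDiag, 1 := by
            refine Finset.sum_le_sum fun p hp => ?_
            obtain ⟨h1, h2, h3⟩ := Finset.mem_offDiag.1 hp
            exact pair_card_le i hi p.1 p.2 (Finset.mem_filter.1 h1).2
              (Finset.mem_filter.1 h2).2 h3
        _ = m * m - m := by rw [Finset.sum_const, smul_eq_mul, mul_one,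
              Finset.offDiag_card]
    exact add_le_add hdiag.le hoff
  -- arithmetic facts
  have hq2 : (2 : ℕ) ≤ q := Fintype.one_lt_card
  have hmn : m ≤ n := Finset.card_filter_le _ _
  have hnm : n ≤ m + 1 := by
    have h1 := Finset.card_filter_add_card_filter_not
      (s := S2) (p := fun b => b ≠ 0)
    have hm' : m = (S2.filter (fun b => b ≠ 0)).card := rfl
    have hn' : n = S2.card := rfl
    have h2 : (S2.filter (fun b => ¬ b ≠ 0)).card ≤ 1 := by
      have : S2.filter (fun b => ¬ b ≠ 0) ⊆ {0} := by
        intro b hb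
        simp only [Finset.mem_filter, not_not] at hb
        simp [hb.2]
      simpa using Finset.card_le_card this
    omega
  have hmm : m ≤ m * m := by
    rcases Nat.eq_zero_or_pos m with h | h
    · simp [h]
    · exact Nat.le_mul_of_pos_left m h
  -- real arithmetic
  have hq0 : (0:ℝ) < (q:ℝ) := by exact_mod_cast (by omega : 0 < q)
  set c : ℝ := (n : ℝ) / q with hc
  set W : ℝ := ∑ a : Fin 2 → K, ((T a : ℝ) - c)^2 with hW
  have hVcard : Fintype.card (Fin 2 → K) = q^2 := by
    rw [Fintype.card_fun]
    simp [hq]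
  have hWexp : W = (∑ a : Fin 2 → K, (T a:ℝ)^2)
      - 2*c*(∑ a : Fin 2 → K, (T a : ℝ)) + (q:ℝ)^2 * c^2 := by
    rw [hW]
    have hpt : ∀ a : Fin 2 → K, ((T a:ℝ) - c)^2 = (T a:ℝ)^2 - 2*c*(T a:ℝ) + c^2 :=
      fun a => by ring
    rw [Finset.sum_congr rfl (fun a _ => hpt a), Finset.sum_add_distrib,
      Finset.sum_sub_distrib, ← Finset.mul_sum, Finset.sum_const, Finset.card_univ,
      nsmul_eq_mul, hVcard]
    push_cast
    ring
  have hsum1r : (∑ a : Fin 2 → K, (T a : ℝ)) = (q:ℝ) * m := by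
    rw [← Nat.cast_sum]
    exact_mod_cast congrArg (Nat.cast : ℕ → ℝ) hsum1
  have hsum2r : (∑ a : Fin 2 → K, (T a:ℝ)^2) ≤ (q:ℝ)*m + ((m:ℝ)*m - m) := by
    have h' : ((∑ a : Fin 2 → K, T a ^2 : ℕ):ℝ) ≤ ((q*m + (m*m-m) : ℕ):ℝ) :=
      Nat.cast_le.2 hsum2
    push_cast [Nat.cast_sub hmm] at h'
    convert h' using 2
  have hq2r : (2:ℝ) ≤ (q:ℝ) := by exact_mod_cast hq2
  have hmnr : (m:ℝ) ≤ (n:ℝ) := by exact_mod_cast hmn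
  have hnmr : (n:ℝ) ≤ (m:ℝ) + 1 := by exact_mod_cast hnm
  have hm0 : (0:ℝ) ≤ (m:ℝ) := Nat.cast_nonneg m
  have hWle : W ≤ (q:ℝ) * n := by
    rw [hWexp, hsum1r, hc]
    have hq' : (q:ℝ) ≠ 0 := ne_of_gt hq0
    have e1 : (q:ℝ)^2 * ((n:ℝ)/q)^2 = (n:ℝ)^2 := by field_simp
    have e2 : 2*((n:ℝ)/q)*((q:ℝ)*m) = 2*(n:ℝ)*m := by field_simp
    rw [e2, e1]
    have h3 : ((n:ℝ)-m)*((1:ℝ)-((n:ℝ)-m)) ≥ 0 :=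
      mul_nonneg (by linarith) (by linarith)
    have h4 : ((q:ℝ)-2)*((n:ℝ)-m) ≥ 0 := mul_nonneg (by linarith) (by linarith)
    nlinarith [hsum2r, h3, h4, hm0]
  -- Cauchy-Schwarz
  have hCS : (∑ a ∈ S1, ((T a:ℝ) - c))^2 ≤ (S1.card : ℝ) * ((q:ℝ) * n) := by
    have h1 := Finset.sum_mul_sq_le_sq_mul_sq S1 (fun _ => (1:ℝ))
      (fun a => (T a:ℝ) - c)
    simp only [one_mul, one_pow] at h1
    rw [Finset.sum_const, nsmul_eq_mul, mul_one] at h1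
    have h2 : (∑ a ∈ S1, ((T a:ℝ)-c)^2) ≤ W := by
      rw [hW]
      exact Finset.sum_le_sum_of_subset_of_nonneg (Finset.subset_univ S1)
        (fun a _ _ => sq_nonneg _)
    calc (∑ a ∈ S1, ((T a:ℝ) - c))^2 ≤ (S1.card : ℝ) * ∑ a ∈ S1, ((T a:ℝ)-c)^2 := h1
      _ ≤ (S1.card : ℝ) * ((q:ℝ)*n) :=
          mul_le_mul_of_nonneg_left (h2.trans hWle) (Nat.cast_nonneg _)
  -- conclusion
  rw [hcount]
  push_cast
  have hlhs : (∑ a ∈ S1, (T a:ℝ)) - (S1.card:ℝ) * (n:ℝ) / (q:ℝ)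
      = ∑ a ∈ S1, ((T a:ℝ) - c) := by
    rw [Finset.sum_sub_distrib, Finset.sum_const, nsmul_eq_mul, hc]
    ring
  rw [hlhs, ← Real.sqrt_sq_eq_abs]
  calc Real.sqrt ((∑ a ∈ S1, ((T a:ℝ) - c))^2)
      ≤ Real.sqrt ((q:ℝ) * ((S1.card:ℝ)*n)) :=
        Real.sqrt_le_sqrt (by linarith [hCS, (by ring :
          (S1.card : ℝ) * ((q:ℝ) * n) = (q:ℝ) * ((S1.card:ℝ)*n))])
    _ = Real.sqrt (q:ℝ) * Real.sqrt ((S1.card:ℝ)*n) :=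
        Real.sqrt_mul (le_of_lt hq0) _
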